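/- Let λ > 0 and let (x, z, θ) solve x' = cos θ, z' = sin θ, θ' = 2λ + cos θ − sin θ/x for s > 0, with x(0) = 0, θ(0) = 0, x(s) > 0 for s > 0. Then 0 < θ(s) < π for all s > 0 and x(s) < 1/λ for all s > 0. -/

import Mathlib

/-- Let `λ > 0` and let the profile curve of a rotational `λ`-translating soliton meet
the axis orthogonally: `x 0 = 0`, `θ 0 = 0`, `x > 0` for `s > 0`, with
`x' = cos θ`, `z' = sin θ`, `θ' = 2λ + cos θ - sin θ/x` for `s > 0`.  Then
`0 < θ(s) < π` and `x(s) < 1/λ` for all `s > 0`. -/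
theorem stmt18 (lam : ℝ) (hlam : 0 < lam) (x z θ : ℝ → ℝ)
    (hxpos : ∀ s : ℝ, 0 < s → 0 < x s)
    (hx : ∀ s : ℝ, 0 < s → HasDerivAt x (Real.cos (θ s)) s)
    (hz : ∀ s : ℝ, 0 < s → HasDerivAt z (Real.sin (θ s)) s)
    (hθ : ∀ s : ℝ, 0 < s → HasDerivAt θ
      (2*lam + Real.cos (θ s) - Real.sin (θ s) / x s) s)
    (hx0 : x 0 = 0) (hθ0 : θ 0 = 0)
    (hxc : ContinuousWithinAt x (Set.Ici 0) 0)
    (hθc : ContinuousWithinAt θ (Set.Ici 0) 0) :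
    ∀ s : ℝ, 0 < s → (0 < θ s ∧ θ s < Real.pi) ∧ x s < 1/lam := by
  -- δ such that |θ t| < 1 for t ∈ [0, δ)
  obtain ⟨δ, hδ, hδθ⟩ : ∃ δ > 0, ∀ t, t ∈ Set.Ici (0:ℝ) → dist t 0 < δ → |θ t| < 1 := by
    have h := Metric.continuousWithinAt_iff.mp hθc 1 one_pos
    obtain ⟨δ, hδ, h⟩ := h
    exact ⟨δ, hδ, fun t ht hd => by
      have := h ht hd; rwa [Real.dist_eq, hθ0, sub_zero] at this⟩
  set F : ℝ → ℝ := fun s => x s * Real.sin (θ s) - lam * (x s)^2 with hFdef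
  have hF' : ∀ s, 0 < s → HasDerivAt F (x s * Real.cos (θ s)^2) s := by
    intro s hs
    have hxne : x s ≠ 0 := (hxpos s hs).ne'
    have h1 := hx s hs
    have h2 := hθ s hs
    have hsin : HasDerivAt (fun t => Real.sin (θ t))
        (Real.cos (θ s) * (2*lam + Real.cos (θ s) - Real.sin (θ s) / x s)) s :=
      (Real.hasDerivAt_sin (θ s)).comp s h2
    have hsq : HasDerivAt (fun t => lam * (x t)^2)
        (lam * (2 * x s ^ 1 * Real.cos (θ s))) s :=
      ((h1.pow 2)).const_mul lam
    have := (h1.mul hsin).sub hsq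
    refine this.congr_deriv ?_
    have hxs : x s * (Real.sin (θ s) / x s) = Real.sin (θ s) := by field_simp
    linear_combination (-Real.cos (θ s)) * hxs
  have hFc : ∀ s, 0 < s → ContinuousAt F s := fun s hs => (hF' s hs).continuousAt
  have hF0 : F 0 = 0 := by simp [hFdef, hx0]
  -- F is positive on (0, ∞)
  have key : ∀ s, 0 < s → 0 < F s := by
    intro s hs
    set c := min δ s / 2 with hc
    have hc0 : 0 < c := by positivity
    have hcδ : c < δ := by
      have : min δ s ≤ δ := min_le_left _ _
      linarith
    have hcs : c < s := by
      have : min δ s ≤ s := min_le_right _ _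
      linarith
    have hmono : StrictMonoOn F (Set.Icc 0 c) := by
      apply strictMonoOn_of_deriv_pos (convex_Icc 0 c)
      · intro t ht
        rcases eq_or_lt_of_le ht.1 with h | h
        · rw [← h]
          exact (hxc.mul ((Real.continuous_sin.continuousAt).comp_continuousWithinAt
            hθc)).sub (continuousWithinAt_const.mul (hxc.pow 2)) |>.mono
            (fun u hu => hu.1)
        · exact (hFc t h).continuousWithinAt
      · intro t ht
        rw [interior_Icc] at ht
        rw [(hF' t ht.1).deriv]
        have hθt : |θ t| < 1 := hδθ t (le_of_lt ht.1) (by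
          rw [Real.dist_eq, sub_zero, abs_of_pos ht.1]; exact lt_trans ht.2 hcδ)
        have hcos : 0 < Real.cos (θ t) := by
          apply Real.cos_pos_of_mem_Ioo
          have hpi : (1:ℝ) < Real.pi / 2 := by
            have := Real.pi_gt_three; linarith
          rw [abs_lt] at hθt
          constructor <;> [linarith; linarith]
        exact mul_pos (hxpos t ht.1) (pow_pos hcos 2)
    have h1 : 0 < F c := by
      have := hmono (Set.left_mem_Icc.mpr hc0.le) ⟨hc0.le, le_refl c⟩ hc0
      rwa [hF0] at this
    have h2 : F c ≤ F s := by
      have hmono2 : MonotoneOn F (Set.Icc c s) := by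
        apply monotoneOn_of_deriv_nonneg (convex_Icc c s)
        · intro t ht
          exact (hFc t (lt_of_lt_of_le hc0 ht.1)).continuousWithinAt
        · intro t ht
          rw [interior_Icc] at ht
          exact (hF' t (lt_trans hc0 ht.1)).differentiableAt.differentiableWithinAt
        · intro t ht
          rw [interior_Icc] at ht
          rw [(hF' t (lt_trans hc0 ht.1)).deriv]
          exact mul_nonneg (hxpos t (lt_trans hc0 ht.1)).le (sq_nonneg _)
      exact hmono2 ⟨le_refl c, hcs.le⟩ ⟨hcs.le, le_refl s⟩ hcs.le
    linarith
  -- λ x < sin θ on (0, ∞)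
  have key2 : ∀ s, 0 < s → lam * x s < Real.sin (θ s) := by
    intro s hs
    have hF : 0 < x s * Real.sin (θ s) - lam * (x s)^2 := key s hs
    have hxs := hxpos s hs
    nlinarith [hF, hxs]
  have hsinpos : ∀ s, 0 < s → 0 < Real.sin (θ s) := fun s hs =>
    lt_of_le_of_lt (mul_nonneg hlam.le (hxpos s hs).le) (key2 s hs)
  intro s hs
  -- choose base point s₀ with θ s₀ ∈ (0, 1)
  set c := min δ s / 2 with hc
  have hc0 : 0 < c := by positivity
  have hcδ : c < δ := by
    have : min δ s ≤ δ := min_le_left _ _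
    linarith
  have hcs : c < s := by
    have : min δ s ≤ s := min_le_right _ _
    linarith
  have hθc1 : |θ c| < 1 := hδθ c hc0.le (by
    rw [Real.dist_eq, sub_zero, abs_of_pos hc0]; exact hcδ)
  have hθcpos : 0 < θ c := by
    by_contra h
    push_neg at h
    have hge : -Real.pi ≤ θ c := by
      rw [abs_lt] at hθc1
      have := Real.pi_gt_three
      linarith
    have := Real.sin_nonpos_of_nonpos_of_neg_pi_le h hge
    exact absurd (hsinpos c hc0) (not_lt.mpr this)
  have hθclt : θ c < Real.pi := by
    rw [abs_lt] at hθc1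
    have := Real.pi_gt_three
    linarith
  have hθcont : ContinuousOn θ (Set.Icc c s) := fun t ht =>
    (hθ t (lt_of_lt_of_le hc0 ht.1)).continuousAt.continuousWithinAt
  have hθspos : 0 < θ s := by
    by_contra h
    push_neg at h
    have h0 : (0:ℝ) ∈ Set.Icc (θ s) (θ c) := ⟨h, hθcpos.le⟩
    have := intermediate_value_Icc' hcs.le hθcont h0
    obtain ⟨t, ht, hθt⟩ := this
    have htpos : 0 < t := lt_of_lt_of_le hc0 ht.1
    have := hsinpos t htpos
    rw [hθt] at this
    simp at this
  have hθslt : θ s < Real.pi := by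
    by_contra h
    push_neg at h
    have h0 : Real.pi ∈ Set.Icc (θ c) (θ s) := ⟨hθclt.le, h⟩
    have := intermediate_value_Icc hcs.le hθcont h0
    obtain ⟨t, ht, hθt⟩ := this
    have htpos : 0 < t := lt_of_lt_of_le hc0 ht.1
    have := hsinpos t htpos
    rw [hθt, Real.sin_pi] at this
    exact lt_irrefl 0 this
  refine ⟨⟨hθspos, hθslt⟩, ?_⟩
  rw [lt_div_iff₀ hlam]
  have h1 : lam * x s < Real.sin (θ s) := key2 s hs
  have h2 : Real.sin (θ s) ≤ 1 := Real.sin_le_one _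
  linarith [h1, h2]
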